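/- arXiv:1512.06428 — 2 statements merged into one kernel-verified Lean document; each statement's English description precedes it below -/
import Mathlib

section
/- (Theorem 1, stated conditionally on the per-frame drift-plus-penalty inequality that the ENSRA algorithm guarantees.) Let T ≥ 1, L ≥ 1, V > 0, η > 0, B₂ ≥ 0 and P_max > 0. Let Q_l : ℕ → ℝ satisfy Q_l(t) ≥ 0 for all t and Q_l(0) = 0 for all l ∈ {1,…,L}, let P : ℕ → ℝ satisfy 0 ≤ P(t) ≤ P_max for all t, and let Pfun : [0, η] → ℝ satisfy 0 ≤ Pfun(ε) ≤ P_max. Suppose that for every ε ∈ [0, η] and every k ∈ ℕ: (1/2)·∑_{l=1}^{L} Q_l((k+1)T)² − (1/2)·∑_{l=1}^{L} Q_l(kT)² + V·∑_{τ=kT}^{(k+1)T−1} P(τ) ≤ B₂·T + V·T·Pfun(ε) − ε·T·∑_{l=1}^{L} Q_l(kT). Then: (a) limsup_{K→∞} (1/(KT))·∑_{t=0}^{KT−1} P(t) ≤ Pfun(0) + B₂/V, and (b) limsup_{K→∞} (1/K)·∑_{k=0}^{K−1} ∑_{l=1}^{L} Q_l(kT) ≤ (B₂ + V·P_max)/η.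 -/
open Filter

lemma sum_blocks_aux (P : ℕ → ℝ) (T K : ℕ) :
    ∑ k ∈ Finset.range K, ∑ τ ∈ Finset.Ico (k * T) ((k + 1) * T), P τ
      = ∑ t ∈ Finset.range (K * T), P t := by
  induction K with
  | zero => simp
  | succ K ih =>
    rw [Finset.sum_range_succ, ih, Finset.range_eq_Ico,
      Finset.sum_Ico_consecutive P (Nat.zero_le _) (Nat.mul_le_mul_right T (Nat.le_succ K)), ← Finset.range_eq_Ico]

lemma limsup_le_of_eventually_le_aux (f : ℕ → ℝ) (c : ℝ) (hnn : ∀ K, 0 ≤ f K)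
    (h : ∀ᶠ K in atTop, f K ≤ c) : limsup f atTop ≤ c :=
  Filter.limsup_le_of_le
    (Filter.isCoboundedUnder_le_of_eventually_le atTop (Eventually.of_forall hnn)) h

/-- Theorem 1, stated conditionally on the per-frame drift-plus-penalty inequality
guaranteed by the ENSRA algorithm: (a) the time average power is within `B₂/V` of
`Pfun 0`, and (b) the frame-start average total queue length is at most
`(B₂ + V P_max)/η`. -/
theorem theorem1_ENSRA
    (T L : ℕ) (hT : 1 ≤ T) (hL : 1 ≤ L)
    (V η B2 Pmax : ℝ) (hV : 0 < V) (hη : 0 < η) (hB2 : 0 ≤ B2) (hPmax : 0 < Pmax)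
    (Q : ℕ → ℕ → ℝ) (hQnonneg : ∀ l t, 0 ≤ Q l t) (hQ0 : ∀ l, Q l 0 = 0)
    (P : ℕ → ℝ) (hP : ∀ t, 0 ≤ P t ∧ P t ≤ Pmax)
    (Pfun : ℝ → ℝ) (hPfun : ∀ ε ∈ Set.Icc (0 : ℝ) η, 0 ≤ Pfun ε ∧ Pfun ε ≤ Pmax)
    (hdpp : ∀ ε ∈ Set.Icc (0 : ℝ) η, ∀ k : ℕ,
      (1 / 2) * ∑ l ∈ Finset.range L, (Q l ((k + 1) * T)) ^ 2
        - (1 / 2) * ∑ l ∈ Finset.range L, (Q l (k * T)) ^ 2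
        + V * ∑ τ ∈ Finset.Ico (k * T) ((k + 1) * T), P τ
      ≤ B2 * T + V * T * Pfun ε - ε * T * ∑ l ∈ Finset.range L, Q l (k * T)) :
    Filter.limsup
        (fun K : ℕ => (1 / ((K : ℝ) * T)) * ∑ t ∈ Finset.range (K * T), P t)
        Filter.atTop
      ≤ Pfun 0 + B2 / V ∧
    Filter.limsup
        (fun K : ℕ => (1 / (K : ℝ)) *
          ∑ k ∈ Finset.range K, ∑ l ∈ Finset.range L, Q l (k * T))
        Filter.atTop
      ≤ (B2 + V * Pmax) / η := by
  have hT0 : (0 : ℝ) < (T : ℝ) := by exact_mod_cast hT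
  -- nonnegativity helpers
  have hQS : ∀ k : ℕ, 0 ≤ ∑ l ∈ Finset.range L, Q l (k * T) :=
    fun k => Finset.sum_nonneg fun l _ => hQnonneg l _
  have hSq : ∀ n : ℕ, 0 ≤ ∑ l ∈ Finset.range L, (Q l n) ^ 2 :=
    fun n => Finset.sum_nonneg fun l _ => sq_nonneg _
  have hPsum : ∀ n : ℕ, 0 ≤ ∑ t ∈ Finset.range n, P t :=
    fun n => Finset.sum_nonneg fun t _ => (hP t).1
  -- key summed inequality
  have key : ∀ ε ∈ Set.Icc (0 : ℝ) η, ∀ K : ℕ,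
      (1 / 2) * ∑ l ∈ Finset.range L, (Q l (K * T)) ^ 2
        + V * ∑ t ∈ Finset.range (K * T), P t
      ≤ (K : ℝ) * (B2 * T + V * T * Pfun ε)
        - ε * T * ∑ k ∈ Finset.range K, ∑ l ∈ Finset.range L, Q l (k * T) := by
    intro ε hε K
    have hsum := Finset.sum_le_sum (fun k (_ : k ∈ Finset.range K) => hdpp ε hε k)
    rw [Finset.sum_sub_distrib, Finset.sum_const, Finset.card_range, nsmul_eq_mul,
      ← Finset.mul_sum] at hsum
    have hl : ∑ k ∈ Finset.range K,
        ((1 / 2) * ∑ l ∈ Finset.range L, (Q l ((k + 1) * T)) ^ 2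
          - (1 / 2) * ∑ l ∈ Finset.range L, (Q l (k * T)) ^ 2
          + V * ∑ τ ∈ Finset.Ico (k * T) ((k + 1) * T), P τ)
        = ((1 / 2) * ∑ l ∈ Finset.range L, (Q l (K * T)) ^ 2
            - (1 / 2) * ∑ l ∈ Finset.range L, (Q l (0 * T)) ^ 2)
          + V * ∑ t ∈ Finset.range (K * T), P t := by
      rw [Finset.sum_add_distrib, Finset.sum_range_sub
        (fun k => (1 / 2) * ∑ l ∈ Finset.range L, (Q l (k * T)) ^ 2),
        ← Finset.mul_sum, sum_blocks_aux]
    rw [hl] at hsum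
    have h0 : ∑ l ∈ Finset.range L, (Q l (0 * T)) ^ 2 = 0 := by
      simp [hQ0]
    rw [h0] at hsum
    linarith
  constructor
  · -- part (a)
    apply limsup_le_of_eventually_le_aux
    · intro K
      exact mul_nonneg (by positivity) (hPsum _)
    · filter_upwards [Filter.eventually_ge_atTop 1] with K hK
      have hK0 : (0 : ℝ) < (K : ℝ) := by exact_mod_cast hK
      have hKT : (0 : ℝ) < (K : ℝ) * T := mul_pos hK0 hT0
      have h0 : (0 : ℝ) ∈ Set.Icc (0 : ℝ) η := ⟨le_refl _, le_of_lt hη⟩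
      have hk := key 0 h0 K
      have hq := hSq (K * T)
      have heq : V * (((K : ℝ) * T) * (Pfun 0 + B2 / V))
          = (K : ℝ) * (B2 * T + V * T * Pfun 0) := by
        field_simp
        ring
      have hlin : ∑ t ∈ Finset.range (K * T), P t
          ≤ ((K : ℝ) * T) * (Pfun 0 + B2 / V) := by
        refine le_of_mul_le_mul_left ?_ hV
        rw [heq]
        nlinarith [hk, hq]
      rw [one_div, inv_mul_le_iff₀ hKT]
      linarith
  · -- part (b)
    apply limsup_le_of_eventually_le_aux
    · intro K
      exact mul_nonneg (by positivity)
        (Finset.sum_nonneg fun k _ => hQS k)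
    · filter_upwards [Filter.eventually_ge_atTop 1] with K hK
      have hK0 : (0 : ℝ) < (K : ℝ) := by exact_mod_cast hK
      have hηmem : η ∈ Set.Icc (0 : ℝ) η := ⟨le_of_lt hη, le_refl _⟩
      have hk := key η hηmem K
      have hq := hSq (K * T)
      have hp := hPsum (K * T)
      have hpf := (hPfun η hηmem).2
      have hVT : V * T * Pfun η ≤ V * T * Pmax := by
        have hVT0 : (0 : ℝ) ≤ V * T := by positivity
        exact mul_le_mul_of_nonneg_left hpf hVT0
      set SQ := ∑ k ∈ Finset.range K, ∑ l ∈ Finset.range L, Q l (k * T) with hSQ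
      have h1 : η * SQ * T ≤ ((K : ℝ) * (B2 + V * Pmax)) * T := by nlinarith [hk, hq, hp]
      have h2 : η * SQ ≤ (K : ℝ) * (B2 + V * Pmax) := le_of_mul_le_mul_right h1 hT0
      have hlin : SQ ≤ (K : ℝ) * ((B2 + V * Pmax) / η) := by
        rw [mul_div_assoc', le_div_iff₀ hη]
        linarith
      rw [one_div, inv_mul_le_iff₀ hK0]
      linarith
end

section
/- (Theorem 2, stated conditionally on the per-window drift-plus-penalty inequality (28) that the P-ENSRA algorithm guarantees.) Let T ≥ 1, W ≥ 1, L ≥ 1, V > 0, θ > 0, B₂ ≥ 0 and Pθ ≥ 0. Let Q_l : ℕ → ℝ satisfy Q_l(t) ≥ 0 for all t and Q_l(0) = 0 for all l ∈ {1,…,L}, and let P : ℕ → ℝ satisfy P(t) ≥ 0 for all t. Suppose that for every window index h ∈ ℕ: (1/2)·∑_{l=1}^{L} Q_l((h+1)WT)² − (1/2)·∑_{l=1}^{L} Q_l(hWT)² + V·∑_{τ=hWT}^{(h+1)WT−1} P(τ) ≤ B₂·W·T + V·W·T·Pθ − θ·T·∑_{l=1}^{L} ∑_{w=0}^{W−1}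 Q_l(hWT + wT). Then: (a) limsup_{H→∞} (1/(HWT))·∑_{t=0}^{HWT−1} P(t) ≤ Pθ + B₂/V, and (b) limsup_{H→∞} (1/(HW))·∑_{h=0}^{H−1} ∑_{w=0}^{W−1} ∑_{l=1}^{L} Q_l(hWT + wT) ≤ (B₂ + V·Pθ)/θ. -/
open Filter

/-- Theorem 2, stated conditionally on the per-window θ-controlled
drift-plus-penalty inequality (28) guaranteed by the P-ENSRA algorithm:
(a) the time average power is at most `Pθ + B₂/V`, and (b) the frame-start
average total queue length is at most `(B₂ + V Pθ)/θ`. -/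
theorem theorem2_PENSRA
    (T W L : ℕ) (hT : 1 ≤ T) (hW : 1 ≤ W) (hL : 1 ≤ L)
    (V θ B2 Pθ : ℝ) (hV : 0 < V) (hθ : 0 < θ) (hB2 : 0 ≤ B2) (hPθ : 0 ≤ Pθ)
    (Q : ℕ → ℕ → ℝ) (hQnonneg : ∀ l t, 0 ≤ Q l t) (hQ0 : ∀ l, Q l 0 = 0)
    (P : ℕ → ℝ) (hP : ∀ t, 0 ≤ P t)
    (hdpp : ∀ h : ℕ,
      (1 / 2) * ∑ l ∈ Finset.range L, (Q l ((h + 1) * W * T)) ^ 2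
        - (1 / 2) * ∑ l ∈ Finset.range L, (Q l (h * W * T)) ^ 2
        + V * ∑ τ ∈ Finset.Ico (h * W * T) ((h + 1) * W * T), P τ
      ≤ B2 * W * T + V * W * T * Pθ
        - θ * T * ∑ l ∈ Finset.range L, ∑ w ∈ Finset.range W, Q l (h * W * T + w * T)) :
    Filter.limsup
        (fun H : ℕ => (1 / ((H : ℝ) * W * T)) * ∑ t ∈ Finset.range (H * W * T), P t)
        Filter.atTop
      ≤ Pθ + B2 / V ∧
    Filter.limsup
        (fun H : ℕ => (1 / ((H : ℝ) * W)) *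
          ∑ h ∈ Finset.range H, ∑ w ∈ Finset.range W, ∑ l ∈ Finset.range L,
            Q l (h * W * T + w * T))
        Filter.atTop
      ≤ (B2 + V * Pθ) / θ := by
  have hTpos : (0:ℝ) < T := by exact_mod_cast hT
  have hWpos : (0:ℝ) < W := by exact_mod_cast hW
  -- Φ
  set Φ : ℕ → ℝ := fun h => (1/2) * ∑ l ∈ Finset.range L, (Q l (h * W * T)) ^ 2 with hΦ
  have hΦnonneg : ∀ h, 0 ≤ Φ h := fun h =>
    mul_nonneg (by norm_num) (Finset.sum_nonneg fun l _ => sq_nonneg _)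
  have hΦ0 : Φ 0 = 0 := by
    simp [hΦ, hQ0]
  set S : ℕ → ℝ := fun H => ∑ h ∈ Finset.range H, ∑ w ∈ Finset.range W,
    ∑ l ∈ Finset.range L, Q l (h * W * T + w * T) with hS
  have hSnonneg : ∀ H, 0 ≤ S H := fun H =>
    Finset.sum_nonneg fun _ _ => Finset.sum_nonneg fun _ _ =>
      Finset.sum_nonneg fun _ _ => hQnonneg _ _
  have hPsumnonneg : ∀ n, 0 ≤ ∑ t ∈ Finset.range n, P t := fun n =>
    Finset.sum_nonneg fun _ _ => hP _
  -- main inequality by induction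
  have key : ∀ H : ℕ, Φ H + V * (∑ t ∈ Finset.range (H * W * T), P t) + θ * T * S H
      ≤ H * (B2 * W * T + V * W * T * Pθ) := by
    intro H
    induction H with
    | zero => simp [hΦ0, hS]
    | succ H ih =>
      have hmono : H * W * T ≤ (H + 1) * W * T := by
        exact Nat.mul_le_mul_right _ (Nat.mul_le_mul_right _ (Nat.le_succ H))
      have hsplit : ∑ t ∈ Finset.range ((H + 1) * W * T), P t
          = ∑ t ∈ Finset.range (H * W * T), P t
            + ∑ t ∈ Finset.Ico (H * W * T) ((H + 1) * W * T), P t := by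
        rw [← Finset.sum_range_add_sum_Ico _ hmono]
      have hSsplit : S (H + 1) = S H + ∑ w ∈ Finset.range W,
          ∑ l ∈ Finset.range L, Q l (H * W * T + w * T) :=
        Finset.sum_range_succ _ H
      have hswap : ∑ w ∈ Finset.range W, ∑ l ∈ Finset.range L, Q l (H * W * T + w * T)
          = ∑ l ∈ Finset.range L, ∑ w ∈ Finset.range W, Q l (H * W * T + w * T) :=
        Finset.sum_comm
      have h28 := hdpp H
      have e1 : Φ (H+1) = (1/2) * ∑ l ∈ Finset.range L, (Q l ((H + 1) * W * T)) ^ 2 := rfl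
      have e2 : Φ H = (1/2) * ∑ l ∈ Finset.range L, (Q l (H * W * T)) ^ 2 := rfl
      rw [hsplit, hSsplit, hswap, e1]
      push_cast
      rw [e2] at ih
      nlinarith [ih, h28]
  -- (a)
  constructor
  · have hev : ∀ᶠ H : ℕ in atTop,
        (1 / ((H : ℝ) * W * T)) * ∑ t ∈ Finset.range (H * W * T), P t ≤ Pθ + B2 / V := by
      filter_upwards [Filter.eventually_ge_atTop 1] with H hH
      have hHpos : (0:ℝ) < H := by exact_mod_cast hH
      have h1 := key H
      have h2 : V * (∑ t ∈ Finset.range (H * W * T), P t)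
          ≤ H * W * T * (V * (Pθ + B2 / V)) := by
        have := hΦnonneg H
        have hθS : 0 ≤ θ * T * S H := mul_nonneg (mul_nonneg hθ.le hTpos.le) (hSnonneg H)
        have : V * (∑ t ∈ Finset.range (H * W * T), P t)
            ≤ H * (B2 * W * T + V * W * T * Pθ) := by linarith
        calc V * (∑ t ∈ Finset.range (H * W * T), P t)
            ≤ H * (B2 * W * T + V * W * T * Pθ) := this
          _ = H * W * T * (V * (Pθ + B2 / V)) := by field_simp; ring
      have hd : (0:ℝ) < (H:ℝ) * W * T := mul_pos (mul_pos hHpos hWpos) hTpos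
      rw [div_mul_eq_mul_div, one_mul, div_le_iff₀ hd]
      have : (∑ t ∈ Finset.range (H * W * T), P t) ≤ H * W * T * (Pθ + B2 / V) := by
        have := (mul_le_mul_iff_of_pos_left hV).mp (by linarith [h2] : V * (∑ t ∈ Finset.range (H * W * T), P t) ≤ V * ((H:ℝ) * W * T * (Pθ + B2 / V)))
        linarith
      linarith [this]
    exact Filter.limsup_le_of_le (isCoboundedUnder_le_of_le atTop (x := 0)
      (fun H => mul_nonneg (by positivity) (hPsumnonneg _))) hev
  · have hev : ∀ᶠ H : ℕ in atTop,
        (1 / ((H : ℝ) * W)) * ∑ h ∈ Finset.range H, ∑ w ∈ Finset.range W,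
          ∑ l ∈ Finset.range L, Q l (h * W * T + w * T) ≤ (B2 + V * Pθ) / θ := by
      filter_upwards [Filter.eventually_ge_atTop 1] with H hH
      have hHpos : (0:ℝ) < H := by exact_mod_cast hH
      have h1 := key H
      have h2 : θ * T * S H ≤ H * (B2 * W * T + V * W * T * Pθ) := by
        have := hΦnonneg H
        have hVP : 0 ≤ V * (∑ t ∈ Finset.range (H * W * T), P t) :=
          mul_nonneg hV.le (hPsumnonneg _)
        linarith
      have hd : (0:ℝ) < (H:ℝ) * W := mul_pos hHpos hWpos
      rw [div_mul_eq_mul_div, one_mul, div_le_iff₀ hd]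
      have hSle : S H ≤ (B2 + V * Pθ) / θ * ((H:ℝ) * W) := by
        rw [← mul_le_mul_iff_of_pos_left (mul_pos hθ hTpos)]
        calc θ * T * S H ≤ H * (B2 * W * T + V * W * T * Pθ) := h2
          _ = θ * T * ((B2 + V * Pθ) / θ * ((H:ℝ) * W)) := by field_simp
      exact hSle
    exact Filter.limsup_le_of_le (isCoboundedUnder_le_of_le atTop (x := 0)
      (fun H => mul_nonneg (by positivity)
        (Finset.sum_nonneg fun _ _ => Finset.sum_nonneg fun _ _ =>
          Finset.sum_nonneg fun _ _ => hQnonneg _ _))) hev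
end
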